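/- With the setup of the preceding node-addition theorem (G has clique {k+1,...,n}, rates ν realize θ on G; G~ adds vertex n+1 adjacent to {k+1,...,n}; ν~ defined as there), the normalizing constants satisfy Z~_{n+1} = Z_n · (1 − ∑_{j=k+1}^n θ_j)/(1 − θ_{n+1} − ∑_{j=k+1}^n θ_j) = Z_n (1 + ν~_{n+1}). -/

import Mathlib

open scoped Classical
open Finset

/-- Weight of a 0-1 configuration `z` with back-off rates `ν`. -/
noncomputable def hcWeight {n : ℕ} (ν : Fin n → ℝ) (z : Fin n → Bool) : ℝ :=
  ∏ i, if z i then ν i else 1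

/-- `z` is an independent-set indicator vector for adjacency `A`. -/
def hcIndep {n : ℕ} (A : Fin n → Fin n → Prop) (z : Fin n → Bool) : Prop :=
  ∀ i j, A i j → ¬(z i = true ∧ z j = true)

/-- Normalizing constant of the hard-core model. -/
noncomputable def hcZ (n : ℕ) (A : Fin n → Fin n → Prop) (ν : Fin n → ℝ) : ℝ :=
  ∑ z : Fin n → Bool, if hcIndep A z then hcWeight ν z else 0

/-- Marginal activity probability of node `i` in the hard-core model. -/
noncomputable def hcMarginal (n : ℕ) (A : Fin n → Fin n → Prop) (ν : Fin n → ℝ)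
    (i : Fin n) : ℝ :=
  (∑ z : Fin n → Bool, if hcIndep A z ∧ z i = true then hcWeight ν z else 0) / hcZ n A ν

/-- with the setup of the node-addition theorem, the normalizing
constants satisfy `Z'_{n+1} = Z_n (1 − ∑θ_clique)/(1 − t − ∑θ_clique) = Z_n (1 + ν'_{n+1})`. -/
theorem stmt13 (n k : ℕ) (hk : k ≤ n) (G : SimpleGraph (Fin n))
    (hclique : ∀ i j : Fin n, k ≤ i.val → k ≤ j.val → i ≠ j → G.Adj i j)
    (ν θ : Fin n → ℝ) (hν : ∀ i, 0 < ν i)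
    (hmarg : ∀ i, hcMarginal n G.Adj ν i = θ i)
    (hS : ∑ j ∈ Finset.univ.filter (fun j : Fin n => k ≤ j.val), θ j < 1)
    (t : ℝ) (ht0 : 0 < t)
    (ht1 : t < 1 - ∑ j ∈ Finset.univ.filter (fun j : Fin n => k ≤ j.val), θ j)
    (G' : SimpleGraph (Fin (n + 1)))
    (hG'1 : ∀ i j : Fin n, G'.Adj i.castSucc j.castSucc ↔ G.Adj i j)
    (hG'2 : ∀ i : Fin n, G'.Adj (Fin.last n) i.castSucc ↔ k ≤ i.val)
    (ν' : Fin (n + 1) → ℝ)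
    (hν'1 : ∀ i : Fin n, i.val < k → ν' i.castSucc = ν i)
    (hν'2 : ∀ i : Fin n, k ≤ i.val → ν' i.castSucc =
      ν i * (1 - ∑ j ∈ Finset.univ.filter (fun j : Fin n => k ≤ j.val), θ j) /
        (1 - t - ∑ j ∈ Finset.univ.filter (fun j : Fin n => k ≤ j.val), θ j))
    (hν'3 : ν' (Fin.last n) =
      t / (1 - t - ∑ j ∈ Finset.univ.filter (fun j : Fin n => k ≤ j.val), θ j)) :
    hcZ (n + 1) G'.Adj ν' =
      hcZ n G.Adj ν *
        (1 - ∑ j ∈ Finset.univ.filter (fun j : Fin n => k ≤ j.val), θ j) /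
          (1 - t - ∑ j ∈ Finset.univ.filter (fun j : Fin n => k ≤ j.val), θ j) ∧
    hcZ (n + 1) G'.Adj ν' = hcZ n G.Adj ν * (1 + ν' (Fin.last n)) := by
    classical
  set C : Finset (Fin n) := Finset.univ.filter (fun j : Fin n => k ≤ j.val) with hCdef
  set S : ℝ := ∑ j ∈ C, θ j with hSdef
  have hD : 0 < 1 - t - S := by linarith
  have hDne : (1 - t - S) ≠ 0 := ne_of_gt hD
  -- positivity of weights
  have hwpos : ∀ z : Fin n → Bool, 0 < hcWeight ν z := by
    intro z
    refine Finset.prod_pos (fun i _ => ?_)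
    by_cases h : z i = true <;> simp [h, hν i]
  set Z : ℝ := hcZ n G.Adj ν with hZdef
  have hZpos : 0 < Z := by
    have h0 : hcIndep G.Adj (fun _ => false) := by
      intro i j _ h; simp at h
    have h1 : (if hcIndep G.Adj (fun _ : Fin n => false) then hcWeight ν (fun _ => false) else 0) = 1 := by
      rw [if_pos h0]; simp [hcWeight]
    have hle : (1:ℝ) ≤ Z := by
      rw [hZdef, hcZ, ← h1]
      refine Finset.single_le_sum (f := fun z => if hcIndep G.Adj z then hcWeight ν z else 0)
        (fun z _ => ?_) (Finset.mem_univ _)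
      by_cases h : hcIndep G.Adj z
      · rw [if_pos h]; exact (hwpos z).le
      · rw [if_neg h]
    linarith
  -- at most one clique vertex can be on
  have huniq : ∀ z : Fin n → Bool, hcIndep G.Adj z → ∀ i ∈ C, ∀ j ∈ C, z i = true → z j = true → i = j := by
    intro z hz i hi j hj hzi hzj
    by_contra hne
    rw [hCdef, Finset.mem_filter] at hi hj
    exact hz i j (hclique i j hi.2 hj.2 hne) ⟨hzi, hzj⟩
  -- generic splitting lemma
  have hsplitgen : ∀ f : (Fin n → Bool) → ℝ,
      (∑ z : Fin n → Bool, if hcIndep G.Adj z then f z else 0)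
      = (∑ z : Fin n → Bool, if hcIndep G.Adj z ∧ ∀ j ∈ C, z j = false then f z else 0)
        + ∑ j ∈ C, ∑ z : Fin n → Bool, if hcIndep G.Adj z ∧ z j = true then f z else 0 := by
    intro f
    rw [Finset.sum_comm, ← Finset.sum_add_distrib]
    refine Finset.sum_congr rfl (fun z _ => ?_)
    by_cases hz : hcIndep G.Adj z
    · by_cases hall : ∀ j ∈ C, z j = false
      · rw [if_pos hz, if_pos ⟨hz, hall⟩]
        have h2 : ∀ j ∈ C, (if hcIndep G.Adj z ∧ z j = true then f z else 0) = 0 := by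
          intro j hj
          rw [if_neg]
          rintro ⟨-, hzj⟩
          rw [hall j hj] at hzj; exact Bool.false_ne_true hzj
        rw [Finset.sum_congr rfl h2, Finset.sum_const_zero, add_zero]
      · push_neg at hall
        obtain ⟨j0, hj0, hzj0⟩ := hall
        have hzj0' : z j0 = true := by
          cases h : z j0
          · exact absurd h hzj0
          · rfl
        rw [if_pos hz, if_neg (fun h => hzj0 (h.2 j0 hj0))]
        rw [Finset.sum_eq_single_of_mem j0 hj0, if_pos ⟨hz, hzj0'⟩, zero_add]
        intro b hb hne
        rw [if_neg]
        rintro ⟨-, hzb⟩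
        exact hne (huniq z hz b hb j0 hj0 hzb hzj0')
    · rw [if_neg hz, if_neg (fun h => hz h.1),
        Finset.sum_eq_zero (fun j _ => if_neg (fun h => hz h.1)), add_zero]
  
  -- on-sums
  have hZon : ∀ j ∈ C, (∑ z : Fin n → Bool, if hcIndep G.Adj z ∧ z j = true then hcWeight ν z else 0) = θ j * Z := by
    intro j _
    have h := hmarg j
    rw [hcMarginal] at h
    rw [← hZdef] at h
    rw [div_eq_iff (ne_of_gt hZpos)] at h
    exact h
  set Z0 : ℝ := ∑ z : Fin n → Bool, if hcIndep G.Adj z ∧ ∀ j ∈ C, z j = false then hcWeight ν z else 0 with hZ0def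
  have hZ0 : Z0 = Z * (1 - S) := by
    have h := hsplitgen (hcWeight ν)
    rw [← hcZ, ← hZdef] at h
    have h2 : (∑ j ∈ C, ∑ z : Fin n → Bool, if hcIndep G.Adj z ∧ z j = true then hcWeight ν z else 0) = S * Z := by
      rw [hSdef, Finset.sum_mul]
      exact Finset.sum_congr rfl hZon
    rw [h2, ← hZ0def] at h
    linear_combination -h
  -- modified weights
  set W : (Fin n → Bool) → ℝ := fun z => ∏ i, if z i then ν' i.castSucc else 1 with hWdef
  have hE1 : ∀ z : Fin n → Bool, (∀ j ∈ C, z j = false) → W z = hcWeight ν z := by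
    intro z hall
    simp only [hWdef, hcWeight]
    refine Finset.prod_congr rfl (fun i _ => ?_)
    by_cases hik : i.val < k
    · rw [hν'1 i hik]
    · have hzi : z i = false := hall i (Finset.mem_filter.mpr ⟨Finset.mem_univ _, le_of_not_gt hik⟩)
      simp [hzi]
  have hE2 : ∀ (z : Fin n → Bool) (j0 : Fin n), j0 ∈ C → hcIndep G.Adj z → z j0 = true →
      W z = hcWeight ν z * ((1 - S) / (1 - t - S)) := by
    intro z j0 hj0 hz hzj0
    have hkj0 : k ≤ j0.val := (Finset.mem_filter.mp hj0).2
    simp only [hWdef, hcWeight]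
    rw [Fintype.prod_eq_mul_prod_compl j0 (fun i => if z i then ν' i.castSucc else 1),
      Fintype.prod_eq_mul_prod_compl j0 (fun i => if z i then ν i else 1)]
    have htail : (∏ i ∈ ({j0}ᶜ : Finset (Fin n)), if z i then ν' i.castSucc else 1)
        = ∏ i ∈ ({j0}ᶜ : Finset (Fin n)), if z i then ν i else 1 := by
      refine Finset.prod_congr rfl (fun i hi => ?_)
      have hne : i ≠ j0 := by simpa using hi
      by_cases hik : i.val < k
      · rw [hν'1 i hik]
      · have hzi : z i = false := by
          cases hzi : z i
          · rfl
          · exact absurd (huniq z hz i (Finset.mem_filter.mpr ⟨Finset.mem_univ _, le_of_not_gt hik⟩)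
              j0 hj0 hzi hzj0) hne
        simp [hzi]
    rw [htail, hzj0, if_pos rfl, if_pos rfl, hν'2 j0 hkj0]
    ring
  -- snoc weights
  have hWsnoc : ∀ (z : Fin n → Bool) (b : Bool), hcWeight ν' (Fin.snoc z b)
      = W z * (if b then ν' (Fin.last n) else 1) := by
    intro z b
    rw [hcWeight, Fin.prod_univ_castSucc]
    simp only [Fin.snoc_castSucc, Fin.snoc_last, hWdef]
  -- independence characterizations
  have hI1 : ∀ z : Fin n → Bool, hcIndep G'.Adj (Fin.snoc z false) ↔ hcIndep G.Adj z := by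
    intro z
    constructor
    · intro h i j hij
      have := h i.castSucc j.castSucc ((hG'1 i j).mpr hij)
      simpa [Fin.snoc_castSucc] using this
    · intro h i j hij
      rcases Fin.eq_castSucc_or_eq_last i with ⟨i', rfl⟩ | rfl
      · rcases Fin.eq_castSucc_or_eq_last j with ⟨j', rfl⟩ | rfl
        · simpa [Fin.snoc_castSucc] using h i' j' ((hG'1 i' j').mp hij)
        · simp [Fin.snoc_last]
      · simp [Fin.snoc_last]
  have hI2 : ∀ z : Fin n → Bool, hcIndep G'.Adj (Fin.snoc z true) ↔
      (hcIndep G.Adj z ∧ ∀ j ∈ C, z j = false) := by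
    intro z
    constructor
    · intro h
      refine ⟨fun i j hij => by
        simpa [Fin.snoc_castSucc] using h i.castSucc j.castSucc ((hG'1 i j).mpr hij),
        fun j hj => ?_⟩
      have hkj : k ≤ j.val := (Finset.mem_filter.mp hj).2
      have hadj := h (Fin.last n) j.castSucc ((hG'2 j).mpr hkj)
      cases hzj : z j
      · rfl
      · exact absurd ⟨by simp [Fin.snoc_last], by simp [Fin.snoc_castSucc, hzj]⟩ hadj
    · rintro ⟨hz, hall⟩ i j hij
      rcases Fin.eq_castSucc_or_eq_last i with ⟨i', rfl⟩ | rfl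
      · rcases Fin.eq_castSucc_or_eq_last j with ⟨j', rfl⟩ | rfl
        · simpa [Fin.snoc_castSucc] using hz i' j' ((hG'1 i' j').mp hij)
        · have hki : k ≤ i'.val := (hG'2 i').mp hij.symm
          have hzi : z i' = false := hall i' (Finset.mem_filter.mpr ⟨Finset.mem_univ _, hki⟩)
          simp [Fin.snoc_castSucc, hzi]
      · rcases Fin.eq_castSucc_or_eq_last j with ⟨j', rfl⟩ | rfl
        · have hkj : k ≤ j'.val := (hG'2 j').mp hij
          have hzj : z j' = false := hall j' (Finset.mem_filter.mpr ⟨Finset.mem_univ _, hkj⟩)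
          simp [Fin.snoc_castSucc, hzj]
        · exact absurd hij (G'.loopless.irrefl _)
  -- reindex the (n+1)-sum
  have hreindex : hcZ (n + 1) G'.Adj ν'
      = (∑ z : Fin n → Bool, if hcIndep G'.Adj (Fin.snoc z false) then hcWeight ν' (Fin.snoc z false) else 0)
      + (∑ z : Fin n → Bool, if hcIndep G'.Adj (Fin.snoc z true) then hcWeight ν' (Fin.snoc z true) else 0) := by
    rw [hcZ]
    rw [← Fintype.sum_equiv (Fin.snocEquiv (fun _ => Bool))
      (fun p => if hcIndep G'.Adj (Fin.snoc p.2 p.1) then hcWeight ν' (Fin.snoc p.2 p.1) else 0)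
      (fun y => if hcIndep G'.Adj y then hcWeight ν' y else 0)
      (fun p => by simp [Fin.snocEquiv]; rfl)]
    rw [Fintype.sum_prod_type, Fintype.sum_bool]
    ring
  -- compute the false part
  have hfalse : (∑ z : Fin n → Bool, if hcIndep G'.Adj (Fin.snoc z false) then hcWeight ν' (Fin.snoc z false) else 0)
      = Z0 + (1 - S) / (1 - t - S) * (S * Z) := by
    have step1 : (∑ z : Fin n → Bool, if hcIndep G'.Adj (Fin.snoc z false) then hcWeight ν' (Fin.snoc z false) else 0)
        = ∑ z : Fin n → Bool, if hcIndep G.Adj z then W z else 0 := by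
      refine Finset.sum_congr rfl (fun z _ => ?_)
      rw [hWsnoc z false]
      simp [hI1 z]
    rw [step1, hsplitgen W]
    congr 1
    · rw [hZ0def]
      refine Finset.sum_congr rfl (fun z _ => ?_)
      by_cases h : hcIndep G.Adj z ∧ ∀ j ∈ C, z j = false
      · rw [if_pos h, if_pos h, hE1 z h.2]
      · rw [if_neg h, if_neg h]
    · rw [show (1 - S) / (1 - t - S) * (S * Z) = ∑ j ∈ C, (1 - S) / (1 - t - S) * (θ j * Z) by
        rw [← Finset.mul_sum, ← Finset.sum_mul, ← hSdef]]
      refine Finset.sum_congr rfl (fun j hj => ?_)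
      rw [← hZon j hj, Finset.mul_sum]
      refine Finset.sum_congr rfl (fun z _ => ?_)
      by_cases h : hcIndep G.Adj z ∧ z j = true
      · rw [if_pos h, if_pos h, hE2 z j hj h.1 h.2]
        ring
      · rw [if_neg h, if_neg h, mul_zero]
  -- compute the true part
  have htrue : (∑ z : Fin n → Bool, if hcIndep G'.Adj (Fin.snoc z true) then hcWeight ν' (Fin.snoc z true) else 0)
      = ν' (Fin.last n) * Z0 := by
    rw [hZ0def, Finset.mul_sum]
    refine Finset.sum_congr rfl (fun z _ => ?_)
    by_cases h : hcIndep G.Adj z ∧ ∀ j ∈ C, z j = false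
    · rw [if_pos ((hI2 z).mpr h), if_pos h, hWsnoc z true, hE1 z h.2]
      simp [mul_comm]
    · rw [if_neg (fun hh => h ((hI2 z).mp hh)), if_neg h, mul_zero]
  have htotal : hcZ (n + 1) G'.Adj ν'
      = Z * (1 - S) + (1 - S) / (1 - t - S) * (S * Z) + t / (1 - t - S) * (Z * (1 - S)) := by
    rw [hreindex, hfalse, htrue, hν'3, hZ0]
  constructor
  · rw [htotal]
    field_simp
    ring
  · rw [htotal, hν'3]
    field_simp
    ring
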